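/- More generally, if I is a binary matrix with symmetry R·I = I·Cᵀ and f is any polynomial with coefficients in GF(2), then H_X = [Iᵀ | f(C)] and H_Z = [f(R) | I] satisfy H_X · H_Zᵀ = 0 over GF(2). -/

import Mathlib

open Matrix Polynomial

def IsPermMatrix {k : ℕ} (M : Matrix (Fin k) (Fin k) (ZMod 2)) : Prop :=
  ∃ σ : Equiv.Perm (Fin k), M = σ.permMatrix (ZMod 2)

lemma pow_shift {m n : ℕ} (I : Matrix (Fin m) (Fin n) (ZMod 2))
    (R : Matrix (Fin m) (Fin m) (ZMod 2)) (C : Matrix (Fin n) (Fin n) (ZMod 2))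
    (hsym : R * I = I * Cᵀ) (k : ℕ) : Iᵀ * (Rᵀ)^k = C^k * Iᵀ := by
  have base : Iᵀ * Rᵀ = C * Iᵀ := by
    have := congrArg Matrix.transpose hsym
    simpa [Matrix.transpose_mul] using this.symm |>.symm
  induction k with
  | zero => simp
  | succ k ih =>
    rw [pow_succ, pow_succ', ← Matrix.mul_assoc, ih, Matrix.mul_assoc, base,
      ← Matrix.mul_assoc, ← pow_succ, ← pow_succ']

lemma poly_shift {m n : ℕ} (I : Matrix (Fin m) (Fin n) (ZMod 2))
    (R : Matrix (Fin m) (Fin m) (ZMod 2)) (C : Matrix (Fin n) (Fin n) (ZMod 2))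
    (hsym : R * I = I * Cᵀ) (f : Polynomial (ZMod 2)) :
    Iᵀ * (aeval R f)ᵀ = aeval C f * Iᵀ := by
  induction f using Polynomial.induction_on' with
  | add p q hp hq =>
    simp only [map_add, Matrix.transpose_add, Matrix.mul_add, Matrix.add_mul, hp, hq]
  | monomial k a =>
    simp only [aeval_monomial, Matrix.transpose_mul, Matrix.transpose_pow]
    rw [show ((algebraMap (ZMod 2) (Matrix (Fin m) (Fin m) (ZMod 2))) a)ᵀ
        = (algebraMap (ZMod 2) (Matrix (Fin m) (Fin m) (ZMod 2))) a by
      simp [Algebra.algebraMap_eq_smul_one, Matrix.transpose_smul]]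
    rw [Algebra.algebraMap_eq_smul_one, Algebra.algebraMap_eq_smul_one]
    simp only [Matrix.smul_mul, Matrix.mul_smul, Matrix.one_mul, Matrix.mul_one]
    rw [pow_shift I R C hsym k]

/-- If `R·I = I·Cᵀ` and `f` is any polynomial over GF(2), then
`H_X = [Iᵀ | f(C)]` and `H_Z = [f(R) | I]` satisfy `H_X · H_Zᵀ = 0`. -/
theorem balanced_product_commute_poly
    {m n : ℕ} (I : Matrix (Fin m) (Fin n) (ZMod 2))
    (R : Matrix (Fin m) (Fin m) (ZMod 2)) (C : Matrix (Fin n) (Fin n) (ZMod 2))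
    (hR : IsPermMatrix R) (hC : IsPermMatrix C)
    (hsym : R * I = I * Cᵀ) (f : Polynomial (ZMod 2)) :
    (fromCols Iᵀ (aeval C f)) * (fromCols (aeval R f) I)ᵀ = 0 := by
  rw [Matrix.transpose_fromCols, Matrix.fromCols_mul_fromRows]
  rw [poly_shift I R C hsym f]
  ext i j
  simp [Matrix.add_apply]
  exact CharTwo.add_self_eq_zero _
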